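/- Let A : ℝ^J → X be a bounded linear operator and define the deterministic EKI iteration: A_0 := A, X̂_0 := x0, and for k ≥ 0, with B_k := R^{-1/2} L A_k, set X̂_{k+1} := X̂_k + A_k (B_k* B_k + I_J)^{-1} B_k* R^{-1/2} (ŷ − L X̂_k) and A_{k+1} := A_k (B_k* B_k + I_J)^{-1/2}. Then, with B := R^{-1/2} L A, for every k ≥ 1 the iterate admits the closed-form representation X̂_k = x0 + A (B* B + k^{-1} I_J)^{-1} B* R^{-1/2} (ŷ − L x0). -/

import Mathlib

open MeasureTheory
open scoped InnerProductSpace ENNReal NNReal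

section Defs

variable {E X Y : Type*}
  [NormedAddCommGroup E] [InnerProductSpace ℝ E] [CompleteSpace E]
  [NormedAddCommGroup X] [InnerProductSpace ℝ X] [CompleteSpace X]
  [NormedAddCommGroup Y] [InnerProductSpace ℝ Y] [CompleteSpace Y]

/-- The direct EKI estimate `X^d_α(A) = x₀ + A (B*B + α I)⁻¹ B* z`, where `B := R^{-1/2} L A`
(passed via the bounded factorization `RinvL = R^{-1/2} L`) and `z = R^{-1/2}(ŷ - L x₀)`.
Note that `A* L* R^{-1} = B* R^{-1/2}`, so this coincides with
`x₀ + A (A* L* R^{-1} L A + α I)⁻¹ A* L* R^{-1} (ŷ - L x₀)`.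
For `A = C0^{1/2}` this is the Tikhonov-regularized solution `x̂_α`. -/
noncomputable def dirSol (A : E →L[ℝ] X) (RinvL : X →L[ℝ] Y) (x0 : X) (z : Y) (α : ℝ) : X :=
  x0 + A ((Ring.inverse ((ContinuousLinearMap.adjoint (RinvL ∘L A)) ∘L (RinvL ∘L A) + α • 1))
    ((ContinuousLinearMap.adjoint (RinvL ∘L A)) z))

/-- The metric projection onto the closed ball of radius `r` around `x0`. -/
noncomputable def projBall (x0 : X) (r : ℝ) (x : X) : X :=
  if ‖x - x0‖ ≤ r then x else x0 + (r / ‖x - x0‖) • (x - x0)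

/-- The discrepancy-principle stopping index `min {k ≥ 1 : ‖ŷ - L (sol k)‖_R ≤ c}`,
where `‖v‖_R = ‖w‖` for the unique `w` with `R^{1/2} w = v`. -/
noncomputable def stopIdx (sqrtR : Y →L[ℝ] Y) (L : X →L[ℝ] Y) (sol : ℕ → X) (yhat : Y)
    (c : ℝ) : ℕ :=
  sInf {k : ℕ | 1 ≤ k ∧ ∃ w : Y, sqrtR w = yhat - L (sol k) ∧ ‖w‖ ≤ c}

/-- `α_k = b^k α₀`. -/
noncomputable def alphaSeq (b α0 : ℝ) (k : ℕ) : ℝ := b ^ k * α0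

/-- `J_k = ⌈b^{-k/γ} J₀⌉`. -/
noncomputable def jSeq (b γ : ℝ) (J0 : ℕ) (k : ℕ) : ℕ := ⌈b ^ (-(k : ℝ) / γ) * (J0 : ℝ)⌉₊

end Defs

set_option maxHeartbeats 1000000
set_option synthInstance.maxHeartbeats 1000000
open ContinuousLinearMap
open scoped InnerProductSpace

lemma aux_ring_inverse_eq {M₀ : Type*} [MonoidWithZero M₀] {w x : M₀}
    (h1 : w * x = 1) (h2 : x * w = 1) : Ring.inverse w = x := by
  have hu : IsUnit w := ⟨⟨w, x, h1, h2⟩, rfl⟩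
  calc Ring.inverse w = Ring.inverse w * (w * x) := by rw [h1, mul_one]
    _ = (Ring.inverse w * w) * x := by rw [mul_assoc]
    _ = x := by rw [Ring.inverse_mul_cancel _ hu, one_mul]

lemma aux_isUnit_of_injective {F : Type*} [NormedAddCommGroup F] [InnerProductSpace ℝ F]
    [FiniteDimensional ℝ F] (T : F →L[ℝ] F) (h : Function.Injective T) : IsUnit T := by
  have hsurj : Function.Surjective T.toLinearMap :=
    (LinearMap.injective_iff_surjective).mp h
  let e := LinearEquiv.ofBijective T.toLinearMap ⟨h, hsurj⟩
  let e' := e.toContinuousLinearEquiv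
  refine ⟨⟨T, e'.symm.toContinuousLinearMap, ?_, ?_⟩, rfl⟩
  · ext x
    have : (e'.symm x : F) = e.symm x := rfl
    simp only [ContinuousLinearMap.mul_apply, ContinuousLinearEquiv.coe_coe,
      ContinuousLinearMap.one_apply, this]
    exact e.apply_symm_apply x
  · ext x
    simp only [ContinuousLinearMap.mul_apply, ContinuousLinearEquiv.coe_coe,
      ContinuousLinearMap.one_apply]
    exact e.symm_apply_apply x

lemma aux_isUnit {F G : Type*} [NormedAddCommGroup F] [InnerProductSpace ℝ F]
    [FiniteDimensional ℝ F] [NormedAddCommGroup G] [InnerProductSpace ℝ G] [CompleteSpace G]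
    (c : ℝ) (hc : 0 ≤ c) (D : F →L[ℝ] G) :
    IsUnit (c • (adjoint D ∘L D) + 1 : F →L[ℝ] F) := by
  have : CompleteSpace F := FiniteDimensional.complete ℝ F
  apply aux_isUnit_of_injective
  intro x y hxy
  have key : ∀ v : F, (c • (adjoint D ∘L D) + 1 : F →L[ℝ] F) v = 0 → v = 0 := by
    intro v hv
    have h1 : ⟪v, (c • (adjoint D ∘L D) + 1 : F →L[ℝ] F) v⟫_ℝ = 0 := by rw [hv]; simp
    rw [ContinuousLinearMap.add_apply, inner_add_right, ContinuousLinearMap.smul_apply,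
      inner_smul_right, ContinuousLinearMap.comp_apply, adjoint_inner_right,
      ContinuousLinearMap.one_apply, real_inner_self_eq_norm_sq] at h1
    have h2 : c * ‖D v‖^2 ≥ 0 := mul_nonneg hc (sq_nonneg _)
    have h3 : ‖v‖^2 = 0 := by nlinarith [real_inner_self_eq_norm_sq v]
    simpa using (pow_eq_zero_iff (n := 2) (by norm_num)).mp h3
  exact sub_eq_zero.mp (key (x - y) (by rw [map_sub, hxy, sub_self]))

lemma aux_inverse_smul {F : Type*} [NormedAddCommGroup F] [InnerProductSpace ℝ F]
    [CompleteSpace F] (c : ℝ) (hc : c ≠ 0) (S : F →L[ℝ] F)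
    (hu : IsUnit (c • S + 1)) :
    Ring.inverse (S + c⁻¹ • 1) = c • Ring.inverse (c • S + 1) := by
  set Riu := Ring.inverse (c • S + 1) with hRiu
  have h1 : (c • S + 1) * Riu = 1 := Ring.mul_inverse_cancel _ hu
  have h2 : Riu * (c • S + 1) = 1 := Ring.inverse_mul_cancel _ hu
  have hexp : c • (S + c⁻¹ • 1) = c • S + 1 := by
    rw [smul_add, smul_smul, mul_inv_cancel₀ hc, one_smul]
  apply aux_ring_inverse_eq
  · calc (S + c⁻¹ • 1) * (c • Riu)
        = c • ((S + c⁻¹ • 1) * Riu) := mul_smul_comm _ _ _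
      _ = (c • (S + c⁻¹ • 1)) * Riu := (smul_mul_assoc _ _ _).symm
      _ = 1 := by rw [hexp, h1]
  · calc (c • Riu) * (S + c⁻¹ • 1)
        = c • (Riu * (S + c⁻¹ • 1)) := smul_mul_assoc _ _ _
      _ = Riu * (c • (S + c⁻¹ • 1)) := (mul_smul_comm _ _ _).symm
      _ = 1 := by rw [hexp, h2]

section Main

variable {X Y : Type*}
  [NormedAddCommGroup X] [InnerProductSpace ℝ X] [CompleteSpace X]
  [NormedAddCommGroup Y] [InnerProductSpace ℝ Y] [CompleteSpace Y]

/-- Main induction lemma, abstracting the Euclidean space to a finite-dimensional `F`. -/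
lemma eki_closed_form
    {F : Type*} [NormedAddCommGroup F] [InnerProductSpace ℝ F]
    [FiniteDimensional ℝ F] [CompleteSpace F]
    (RinvL : X →L[ℝ] Y)
    (A : F →L[ℝ] X) (x0 : X) (z0 : Y)
    (Xh : ℕ → X) (Aseq : ℕ → (F →L[ℝ] X))
    (hX0 : Xh 0 = x0) (hA0 : Aseq 0 = A)
    (hXrec : ∀ k : ℕ, Xh (k + 1) = Xh k + (Aseq k)
      ((Ring.inverse ((adjoint (RinvL ∘L Aseq k)) ∘L (RinvL ∘L Aseq k) + 1))
        ((adjoint (RinvL ∘L Aseq k)) (z0 - RinvL (Xh k)))))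
    (Q : ℕ → (F →L[ℝ] F))
    (hQadj : ∀ k, adjoint (Q k) = Q k)
    (hQsq : ∀ k, (Q k) ∘L (Q k) =
      Ring.inverse ((adjoint (RinvL ∘L Aseq k)) ∘L (RinvL ∘L Aseq k) + 1))
    (hArec : ∀ k, Aseq (k + 1) = Aseq k ∘L Q k) :
    ∀ k : ℕ,
      Xh k = x0 + A
        (((k : ℝ) • Ring.inverse ((k : ℝ) • ((adjoint (RinvL ∘L A)) ∘L (RinvL ∘L A)) + 1))
          ((adjoint (RinvL ∘L A)) (z0 - RinvL x0))) ∧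
      ∃ P : F →L[ℝ] F, IsUnit P ∧ Aseq k = A ∘L P ∧
        P * adjoint P = Ring.inverse ((k : ℝ) • ((adjoint (RinvL ∘L A)) ∘L (RinvL ∘L A)) + 1) := by
  set Bop := RinvL ∘L A with hBop
  set S : F →L[ℝ] F := adjoint Bop ∘L Bop with hSdef
  set z : Y := z0 - RinvL x0 with hz
  -- the family of units `u k = k • S + 1`
  have hu : ∀ c : ℝ, 0 ≤ c → IsUnit (c • S + 1) := fun c hc => aux_isUnit c hc Bop
  intro k
  induction k with
  | zero =>
      refine ⟨by simpa using hX0, 1, isUnit_one, by rw [hA0]; ext x; rfl, ?_⟩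
      rw [show adjoint (1 : F →L[ℝ] F) = 1 from adjoint_id]
      simp
  | succ k ih =>
      obtain ⟨hXk, P, hPunit, hAk, hPP⟩ := ih
      obtain ⟨Pu, rfl⟩ := hPunit
      -- units for u k and u (k+1)
      obtain ⟨uk, huk⟩ := hu (k : ℝ) (by positivity)
      obtain ⟨uk', huk'⟩ := hu ((k : ℝ) + 1) (by positivity)
      -- the adjoint of P is a unit
      have hPdIsUnit : IsUnit (adjoint (↑Pu : F →L[ℝ] F)) := by
        rw [← star_eq_adjoint]; exact Pu.isUnit.star
      obtain ⟨Pd, hPd⟩ := hPdIsUnit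
      -- basic facts
      have hcast : ((k + 1 : ℕ) : ℝ) = (k : ℝ) + 1 := by push_cast; ring
      have hRiuk : Ring.inverse ((k : ℝ) • S + 1) = ↑uk⁻¹ := by
        rw [← huk, Ring.inverse_unit]
      have hRiuk' : Ring.inverse (((k : ℝ) + 1) • S + 1) = ↑uk'⁻¹ := by
        rw [← huk', Ring.inverse_unit]
      -- `RinvL ∘L Aseq k = Bop ∘L P`
      have hBP : RinvL ∘L Aseq k = Bop ∘L ↑Pu := by rw [hAk]; ext x; rfl
      -- `T_k = P† S P` (as a ring element), so `T_k + 1 = P† u' P`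
      have hT : (adjoint (RinvL ∘L Aseq k)) ∘L (RinvL ∘L Aseq k) = ↑Pd * S * ↑Pu := by
        rw [hBP, adjoint_comp, hPd]; ext x; rfl
      -- `P† (u k) P = 1`
      have hPdfromPP : (↑Pd : F →L[ℝ] F) = ↑Pu⁻¹ * ↑uk⁻¹ := by
        have h1 : (↑Pu : F →L[ℝ] F) * ↑Pd = ↑uk⁻¹ := by rw [hPd, hPP, hRiuk]
        calc (↑Pd : F →L[ℝ] F) = ↑Pu⁻¹ * (↑Pu * ↑Pd) := by
              rw [← mul_assoc, Units.inv_mul, one_mul]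
          _ = ↑Pu⁻¹ * ↑uk⁻¹ := by rw [h1]
      have hPuP : (↑Pd : F →L[ℝ] F) * ↑uk * ↑Pu = 1 := by
        rw [hPdfromPP]
        calc (↑Pu⁻¹ : F →L[ℝ] F) * ↑uk⁻¹ * ↑uk * ↑Pu
            = ↑Pu⁻¹ * (↑uk⁻¹ * ↑uk) * ↑Pu := by rw [mul_assoc (↑Pu⁻¹ : F →L[ℝ] F)]
          _ = 1 := by rw [Units.inv_mul, mul_one, Units.inv_mul]
      -- `T_k + 1 = P† * u' * P`
      have hTk1 : (adjoint (RinvL ∘L Aseq k)) ∘L (RinvL ∘L Aseq k) + 1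
          = ↑Pd * ↑uk' * ↑Pu := by
        have expand : ((k : ℝ) + 1) • S + 1 = S + ((k : ℝ) • S + 1) := by module
        rw [hT, huk', expand, ← huk, ← hPuP]
        noncomm_ring
      -- the key identity: `P (T_k + 1)⁻¹ P† = (u')⁻¹`
      have hkey : (↑Pu : F →L[ℝ] F) *
          Ring.inverse ((adjoint (RinvL ∘L Aseq k)) ∘L (RinvL ∘L Aseq k) + 1) * ↑Pd
          = ↑uk'⁻¹ := by
        rw [hTk1]
        have : Ring.inverse ((↑Pd : F →L[ℝ] F) * ↑uk' * ↑Pu) = ↑(Pd * uk' * Pu)⁻¹ := by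
          rw [← Units.val_mul, ← Units.val_mul, Ring.inverse_unit]
        rw [this, mul_inv_rev, mul_inv_rev]
        simp only [Units.val_mul]
        calc (↑Pu : F →L[ℝ] F) * (↑Pu⁻¹ * ↑uk'⁻¹ * ↑Pd⁻¹) * ↑Pd
            = (↑Pu * ↑Pu⁻¹) * ↑uk'⁻¹ * (↑Pd⁻¹ * ↑Pd) := by noncomm_ring
          _ = ↑uk'⁻¹ := by rw [Units.mul_inv, Units.inv_mul, one_mul, mul_one]
      constructor
      · -- the X part
        rw [hXrec k, hXk]
        -- the residual: `z0 - RinvL (Xh k) = z - Bop (g_k v)` with `v = B† z`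
        have hres : z0 - RinvL (x0 + A
            (((k : ℝ) • Ring.inverse ((k : ℝ) • S + 1)) ((adjoint Bop) z)))
            = z - Bop (((k : ℝ) • Ring.inverse ((k : ℝ) • S + 1)) ((adjoint Bop) z)) := by
          rw [map_add, hz]
          have : RinvL (A (((k : ℝ) • Ring.inverse ((k : ℝ) • S + 1)) ((adjoint Bop) z)))
              = Bop (((k : ℝ) • Ring.inverse ((k : ℝ) • S + 1)) ((adjoint Bop) z)) := rfl
          rw [this]; abel
        rw [hres]
        -- `B† (z - Bop (g_k v)) = (u k)⁻¹ v`
        have hBres : (adjoint Bop) (z - Bop (((k : ℝ) • Ring.inverse ((k : ℝ) • S + 1))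
            ((adjoint Bop) z))) = (↑uk⁻¹ : F →L[ℝ] F) ((adjoint Bop) z) := by
          have hop : (1 : F →L[ℝ] F) - S * ((k : ℝ) • Ring.inverse ((k : ℝ) • S + 1))
              = ↑uk⁻¹ := by
            rw [hRiuk, mul_smul_comm]
            have h1 : (↑uk : F →L[ℝ] F) * ↑uk⁻¹ = 1 := Units.mul_inv uk
            rw [huk] at h1
            have h2 : (k : ℝ) • (S * ↑uk⁻¹) + ↑uk⁻¹ = 1 := by
              have := h1
              rwa [add_mul, one_mul, smul_mul_assoc] at this
            rw [← h2]; abel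
          calc (adjoint Bop) (z - Bop (((k : ℝ) • Ring.inverse ((k : ℝ) • S + 1))
              ((adjoint Bop) z)))
              = ((1 : F →L[ℝ] F) - S * ((k : ℝ) • Ring.inverse ((k : ℝ) • S + 1)))
                ((adjoint Bop) z) := by
                rw [map_sub]
                simp only [ContinuousLinearMap.sub_apply, ContinuousLinearMap.one_apply,
                  ContinuousLinearMap.mul_apply]
                rfl
            _ = (↑uk⁻¹ : F →L[ℝ] F) ((adjoint Bop) z) := by rw [hop]
        -- `adjoint (RinvL ∘L Aseq k) = Pd ∘L adjoint Bop`
        have hadjseq : ∀ w : Y, (adjoint (RinvL ∘L Aseq k)) w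
            = (↑Pd : F →L[ℝ] F) ((adjoint Bop) w) := by
          intro w; rw [hBP, adjoint_comp, hPd]; rfl
        rw [hadjseq, hBres]
        -- assemble the increment as an operator applied to `v = B† z`
        have happ : (Aseq k) ((Ring.inverse ((adjoint (RinvL ∘L Aseq k))
              ∘L (RinvL ∘L Aseq k) + 1))
            ((↑Pd : F →L[ℝ] F) ((↑uk⁻¹ : F →L[ℝ] F) ((adjoint Bop) z))))
            = A ((((↑Pu : F →L[ℝ] F) * Ring.inverse ((adjoint (RinvL ∘L Aseq k))
                ∘L (RinvL ∘L Aseq k) + 1) * ↑Pd) * ↑uk⁻¹) ((adjoint Bop) z)) := by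
          rw [hAk]
          simp only [ContinuousLinearMap.mul_apply, ContinuousLinearMap.comp_apply]
        rw [happ, hkey]
        -- final operator identity: `g_k + (u')⁻¹ (u k)⁻¹ = g_{k+1}`
        have hsum : (k : ℝ) • Ring.inverse ((k : ℝ) • S + 1)
            + (↑uk'⁻¹ : F →L[ℝ] F) * ↑uk⁻¹
            = ((k + 1 : ℕ) : ℝ) • Ring.inverse (((k + 1 : ℕ) : ℝ) • S + 1) := by
          rw [hcast, hRiuk, hRiuk']
          -- multiply both sides by `u'` on the left and `u k` on the right
          have cancel : ∀ W V : F →L[ℝ] F,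
              (↑uk' : F →L[ℝ] F) * W * ↑uk = ↑uk' * V * ↑uk → W = V := by
            intro W V h
            have := congrArg (fun t => (↑uk'⁻¹ : F →L[ℝ] F) * t * ↑uk⁻¹) h
            simpa [← mul_assoc, Units.inv_mul, Units.mul_inv, one_mul, mul_one,
              mul_assoc] using this
          apply cancel
          have e1 : (↑uk' : F →L[ℝ] F) * ((k : ℝ) • ↑uk⁻¹ + ↑uk'⁻¹ * ↑uk⁻¹) * ↑uk
              = (k : ℝ) • ↑uk' + 1 := by
            rw [mul_add, add_mul]
            rw [mul_smul_comm, smul_mul_assoc, mul_assoc, Units.inv_mul, mul_one]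
            have : (↑uk' : F →L[ℝ] F) * (↑uk'⁻¹ * ↑uk⁻¹) * ↑uk = 1 := by
              rw [← mul_assoc, Units.mul_inv, one_mul, Units.inv_mul]
            rw [this]
          have e2 : (↑uk' : F →L[ℝ] F) * (((k : ℝ) + 1) • ↑uk'⁻¹) * ↑uk
              = ((k : ℝ) + 1) • ↑uk := by
            rw [mul_smul_comm, Units.mul_inv, smul_mul_assoc, one_mul]
          rw [e1, e2, huk, huk']
          module
        calc x0 + A (((k : ℝ) • Ring.inverse ((k : ℝ) • S + 1)) ((adjoint Bop) z))
              + A (((↑uk'⁻¹ : F →L[ℝ] F) * ↑uk⁻¹) ((adjoint Bop) z))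
            = x0 + A ((((k : ℝ) • Ring.inverse ((k : ℝ) • S + 1)) ((adjoint Bop) z))
                + (((↑uk'⁻¹ : F →L[ℝ] F) * ↑uk⁻¹) ((adjoint Bop) z))) := by
              rw [add_assoc, ← map_add]
          _ = x0 + A ((((k : ℝ) • Ring.inverse ((k : ℝ) • S + 1))
                + (↑uk'⁻¹ : F →L[ℝ] F) * ↑uk⁻¹) ((adjoint Bop) z)) := by
              rw [ContinuousLinearMap.add_apply]
          _ = x0 + A ((((k + 1 : ℕ) : ℝ) • Ring.inverse (((k + 1 : ℕ) : ℝ) • S + 1))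
                ((adjoint Bop) z)) := by rw [hsum]
      · -- the A part
        refine ⟨↑Pu * Q k, ?_, ?_, ?_⟩
        · -- `Q k` is a unit, hence so is `P * Q k`
          have hQk : Q k * Q k = Ring.inverse ((adjoint (RinvL ∘L Aseq k))
              ∘L (RinvL ∘L Aseq k) + 1) := hQsq k
          have hTunit : IsUnit ((adjoint (RinvL ∘L Aseq k)) ∘L (RinvL ∘L Aseq k) + 1) := by
            have := aux_isUnit 1 zero_le_one (RinvL ∘L Aseq k)
            simpa using this
          obtain ⟨Tu, hTu⟩ := hTunit
          have hQQ : Q k * Q k = ↑Tu⁻¹ := by rw [hQk, ← hTu, Ring.inverse_unit]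
          have hQunit : IsUnit (Q k) := by
            have h1 : Q k * (Q k * ↑Tu) = 1 := by
              rw [← mul_assoc, hQQ, Units.inv_mul]
            have h2 : (↑Tu * Q k) * Q k = 1 := by
              rw [mul_assoc, hQQ, Units.mul_inv]
            have h3 : (↑Tu : F →L[ℝ] F) * Q k = Q k * ↑Tu :=
              left_inv_eq_right_inv h2 h1
            exact ⟨⟨Q k, Q k * ↑Tu, h1, by rw [← h3, h2]⟩, rfl⟩
          exact Pu.isUnit.mul hQunit
        · rw [hArec k, hAk]; ext x; rfl
        · -- `(P Q)(P Q)† = (u (k+1))⁻¹`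
          have hadjPQ : adjoint ((↑Pu : F →L[ℝ] F) * Q k) = Q k * ↑Pd := by
            have : ((↑Pu : F →L[ℝ] F) * Q k) = (↑Pu : F →L[ℝ] F) ∘L Q k := rfl
            rw [this, adjoint_comp, hQadj k, hPd]; rfl
          rw [hadjPQ, hcast, hRiuk']
          have hQmul : Q k * Q k = Ring.inverse ((adjoint (RinvL ∘L Aseq k))
              ∘L (RinvL ∘L Aseq k) + 1) := hQsq k
          calc (↑Pu : F →L[ℝ] F) * Q k * (Q k * ↑Pd)
              = ↑Pu * (Q k * Q k) * ↑Pd := by noncomm_ring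
            _ = ↑Pu * Ring.inverse ((adjoint (RinvL ∘L Aseq k))
                  ∘L (RinvL ∘L Aseq k) + 1) * ↑Pd := by rw [hQmul]
            _ = ↑uk'⁻¹ := hkey

end Main

/-- STATEMENT 1: closed-form representation of the deterministic EKI iteration. -/
theorem stmt1
    {X Y : Type*}
    [NormedAddCommGroup X] [InnerProductSpace ℝ X] [CompleteSpace X]
    [TopologicalSpace.SeparableSpace X]
    [NormedAddCommGroup Y] [InnerProductSpace ℝ Y] [CompleteSpace Y]
    [TopologicalSpace.SeparableSpace Y]
    (L : X →L[ℝ] Y)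
    (C0 : X →L[ℝ] X) (hC0pos : C0.IsPositive) (hC0inj : Function.Injective C0)
    (hC0cpt : IsCompactOperator (⇑C0))
    (R : Y →L[ℝ] Y) (hRpos : R.IsPositive) (hRinj : Function.Injective R)
    (sqrtR : Y →L[ℝ] Y) (hsqrtRpos : sqrtR.IsPositive) (hsqrtR : sqrtR ∘L sqrtR = R)
    -- `RinvL = R^{-1/2} L` is bounded with `‖R^{-1/2} L‖ ≤ c_RL`
    (RinvL : X →L[ℝ] Y) (hRinvL : sqrtR ∘L RinvL = L)
    (cRL : ℝ) (hcRL : ‖RinvL‖ ≤ cRL)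
    (J : ℕ) (A : EuclideanSpace ℝ (Fin J) →L[ℝ] X)
    (x0 : X)
    -- the data `ŷ ∈ ran R^{1/2}`, with `z0 = R^{-1/2} ŷ`
    (yhat : Y) (z0 : Y) (hz0 : sqrtR z0 = yhat)
    -- the deterministic EKI iteration in square-root form:
    (Xh : ℕ → X) (Aseq : ℕ → (EuclideanSpace ℝ (Fin J) →L[ℝ] X))
    (hX0 : Xh 0 = x0) (hA0 : Aseq 0 = A)
    -- `X̂_{k+1} = X̂_k + A_k (B_k* B_k + I)⁻¹ B_k* R^{-1/2}(ŷ - L X̂_k)` with `B_k = R^{-1/2} L A_k`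
    (hXrec : ∀ k : ℕ, Xh (k + 1) = Xh k + (Aseq k)
      ((Ring.inverse ((ContinuousLinearMap.adjoint (RinvL ∘L Aseq k)) ∘L (RinvL ∘L Aseq k) + 1))
        ((ContinuousLinearMap.adjoint (RinvL ∘L Aseq k)) (z0 - RinvL (Xh k)))))
    -- `A_{k+1} = A_k (B_k* B_k + I)^{-1/2}`, where `Q k` is the positive square root
    -- of `(B_k* B_k + I)⁻¹`
    (Q : ℕ → (EuclideanSpace ℝ (Fin J) →L[ℝ] EuclideanSpace ℝ (Fin J)))
    (hQpos : ∀ k, (Q k).IsPositive)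
    (hQsq : ∀ k, (Q k) ∘L (Q k) =
      Ring.inverse ((ContinuousLinearMap.adjoint (RinvL ∘L Aseq k)) ∘L (RinvL ∘L Aseq k) + 1))
    (hArec : ∀ k, Aseq (k + 1) = Aseq k ∘L Q k) :
    -- then `X̂_k = x₀ + A (B* B + k⁻¹ I)⁻¹ B* R^{-1/2}(ŷ - L x₀)` with `B = R^{-1/2} L A`
    ∀ k : ℕ, 1 ≤ k →
      Xh k = x0 + A
        ((Ring.inverse ((ContinuousLinearMap.adjoint (RinvL ∘L A)) ∘L (RinvL ∘L A)
            + (k : ℝ)⁻¹ • 1))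
          ((ContinuousLinearMap.adjoint (RinvL ∘L A)) (z0 - RinvL x0))) := by
  intro k hk
  have hk0 : (k : ℝ) ≠ 0 := by positivity
  have main := eki_closed_form RinvL A x0 z0 Xh Aseq hX0 hA0 hXrec Q
    (fun k => (hQpos k).isSelfAdjoint.adjoint_eq) hQsq hArec k
  obtain ⟨hXk, -⟩ := main
  rw [hXk]
  have hu : IsUnit ((k : ℝ) • (ContinuousLinearMap.adjoint (RinvL ∘L A) ∘L (RinvL ∘L A)) + 1) :=
    aux_isUnit (k : ℝ) (by positivity) (RinvL ∘L A)
  rw [aux_inverse_smul (k : ℝ) hk0 _ hu]
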